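/- If y(x) is a solution of the Painlevé III equation with three zero parameters y'' = y'^2/y - y'/x + b/x on a domain with x > 0, y ≠ 0, then the function obtained from the symmetry X₂ = (x ln x - 2x) ∂/∂x + y ln x ∂/∂y at the infinitesimal level satisfies the linearized equation; equivalently, the vector field X₂ = (x ln x - 2x) ∂_x + (y ln x) ∂_y is an infinitesimal point symmetry of y'' = y'^2/y - y'/x + b/x: the second prolongation of X₂ applied to the expression y'' - y'^2/y + y'/x - b/x vanishes on solutions. -/

import Mathlib

/-- Partial derivatives of a function of (x, y, p). -/
noncomputable def pdx3 (f : ℝ → ℝ → ℝ → ℝ) (x y p : ℝ) : ℝ := deriv (fun t => f t y p) x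
noncomputable def pdy3 (f : ℝ → ℝ → ℝ → ℝ) (x y p : ℝ) : ℝ := deriv (fun t => f x t p) y
noncomputable def pdp3 (f : ℝ → ℝ → ℝ → ℝ) (x y p : ℝ) : ℝ := deriv (fun t => f x y t) p

/-- Total derivative operator D_x = ∂_x + p ∂_y + f ∂_p along the ODE y'' = f(x,y,y'). -/
noncomputable def totalD (f g : ℝ → ℝ → ℝ → ℝ) (x y p : ℝ) : ℝ :=
  pdx3 g x y p + p * pdy3 g x y p + f x y p * pdp3 g x y p

/-- First prolongation coefficient η⁽¹⁾ = D_x η - p D_x ξ. -/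
noncomputable def prol1 (f : ℝ → ℝ → ℝ → ℝ) (xi eta : ℝ → ℝ → ℝ) (x y p : ℝ) : ℝ :=
  totalD f (fun x y _ => eta x y) x y p - p * totalD f (fun x y _ => xi x y) x y p

/-- Second prolongation coefficient (on solutions): η⁽²⁾ = D_x η⁽¹⁾ - f D_x ξ. -/
noncomputable def prol2 (f : ℝ → ℝ → ℝ → ℝ) (xi eta : ℝ → ℝ → ℝ) (x y p : ℝ) : ℝ :=
  totalD f (prol1 f xi eta) x y p - f x y p * totalD f (fun x y _ => xi x y) x y p

-- derivative helpers
lemma dA {x : ℝ} (hx : x ≠ 0) :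
    deriv (fun t : ℝ => t * Real.log t - 2 * t) x = Real.log x - 1 := by
  have h1 : HasDerivAt (fun t : ℝ => t * Real.log t) (1 * Real.log x + x * x⁻¹) x :=
    (hasDerivAt_id x).mul (Real.hasDerivAt_log hx)
  have h2 : HasDerivAt (fun t : ℝ => 2 * t) (2 * 1) x := (hasDerivAt_id x).const_mul 2
  have : deriv (fun t : ℝ => t * Real.log t - 2 * t) x = 1 * Real.log x + x * x⁻¹ - 2 * 1 :=
    (h1.sub h2).deriv
  rw [this, mul_inv_cancel₀ hx]; ring

lemma dB {x : ℝ} (hx : x ≠ 0) (y : ℝ) :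
    deriv (fun t : ℝ => y * Real.log t) x = y / x := by
  have := ((Real.hasDerivAt_log hx).const_mul y).deriv
  rw [this]; ring

lemma dC (x y : ℝ) : deriv (fun t : ℝ => t * Real.log x) y = Real.log x := by
  simp

lemma dfx {x : ℝ} (hx : x ≠ 0) (b y p : ℝ) :
    deriv (fun t : ℝ => p ^ 2 / y - p / t + b / t) x = p / x ^ 2 - b / x ^ 2 := by
  have h1 : HasDerivAt (fun t : ℝ => p * t⁻¹) (p * (-(x ^ 2)⁻¹)) x :=
    (hasDerivAt_inv hx).const_mul p
  have h2 : HasDerivAt (fun t : ℝ => b * t⁻¹) (b * (-(x ^ 2)⁻¹)) x :=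
    (hasDerivAt_inv hx).const_mul b
  have h : HasDerivAt (fun t : ℝ => p ^ 2 / y - p / t + b / t)
      (0 - p * (-(x ^ 2)⁻¹) + b * (-(x ^ 2)⁻¹)) x := by
    have h3 : HasDerivAt (fun t : ℝ => p ^ 2 / y - p * t⁻¹ + b * t⁻¹)
        (0 - p * (-(x ^ 2)⁻¹) + b * (-(x ^ 2)⁻¹)) x := ((hasDerivAt_const x (p ^ 2 / y)).sub h1).add h2
    simpa only [div_eq_mul_inv] using h3
  rw [h.deriv]; ring

lemma dfy {y : ℝ} (hy : y ≠ 0) (b x p : ℝ) :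
    deriv (fun t : ℝ => p ^ 2 / t - p / x + b / x) y = -(p ^ 2) / y ^ 2 := by
  have h1 : HasDerivAt (fun t : ℝ => p ^ 2 * t⁻¹) (p ^ 2 * (-(y ^ 2)⁻¹)) y :=
    (hasDerivAt_inv hy).const_mul (p ^ 2)
  have h : HasDerivAt (fun t : ℝ => p ^ 2 / t - p / x + b / x)
      (p ^ 2 * (-(y ^ 2)⁻¹)) y := by
    simpa [div_eq_mul_inv] using (h1.sub_const (p / x)).add_const (b / x)
  rw [h.deriv]; ring

lemma dfp (b x y p : ℝ) :
    deriv (fun t : ℝ => t ^ 2 / y - t / x + b / x) p = 2 * p / y - 1 / x := by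
  have h1 : HasDerivAt (fun t : ℝ => t ^ 2 / y) (((2 : ℕ) * p ^ 1 : ℝ) / y) p :=
    (hasDerivAt_pow 2 p).div_const y
  have h2 : HasDerivAt (fun t : ℝ => t / x) (1 / x) p := (hasDerivAt_id p).div_const x
  have h : HasDerivAt (fun t : ℝ => t ^ 2 / y - t / x + b / x) (((2 : ℕ) * p ^ 1 : ℝ) / y - 1 / x) p :=
    (h1.sub h2).add_const (b / x)
  rw [h.deriv]; push_cast; ring

lemma prol1_eq (b : ℝ) {x : ℝ} (hx : x ≠ 0) (y p : ℝ) :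
    prol1 (fun x y p => p ^ 2 / y - p / x + b / x)
      (fun x _ => x * Real.log x - 2 * x) (fun x y => y * Real.log x) x y p = y / x + p := by
  simp only [prol1, totalD, pdx3, pdy3, pdp3, dA hx, dB hx, dC, deriv_const']
  ring

/-- The vector field X₂ = (x ln x - 2x)∂_x + (y ln x)∂_y is an infinitesimal point symmetry of
y'' = y'²/y - y'/x + b/x: the second prolongation annihilates y'' - f on solutions, i.e.
η⁽²⁾ = ξ f_x + η f_y + η⁽¹⁾ f_p. -/
theorem painleveIII_three_zero_infinitesimal_symmetry (b : ℝ) :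
    ∀ x > (0 : ℝ), ∀ y : ℝ, y ≠ 0 → ∀ p : ℝ,
      prol2 (fun x y p => p ^ 2 / y - p / x + b / x)
          (fun x _ => x * Real.log x - 2 * x) (fun x y => y * Real.log x) x y p =
        (x * Real.log x - 2 * x) * pdx3 (fun x y p => p ^ 2 / y - p / x + b / x) x y p
          + (y * Real.log x) * pdy3 (fun x y p => p ^ 2 / y - p / x + b / x) x y p
          + prol1 (fun x y p => p ^ 2 / y - p / x + b / x)
              (fun x _ => x * Real.log x - 2 * x) (fun x y => y * Real.log x) x y p
            * pdp3 (fun x y p => p ^ 2 / y - p / x + b / x) x y p := by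
  intro x hx y hy p
  set F : ℝ → ℝ → ℝ → ℝ := fun x y p => p ^ 2 / y - p / x + b / x with hF
  have hxne : x ≠ 0 := ne_of_gt hx
  -- outer x-derivative of prol1
  have hev : (fun t => prol1 F (fun x _ => x * Real.log x - 2 * x)
      (fun x y => y * Real.log x) t y p) =ᶠ[nhds x] (fun t => y * t⁻¹ + p) := by
    filter_upwards [Ioi_mem_nhds hx] with t ht
    rw [prol1_eq b (ne_of_gt ht)]; rw [div_eq_mul_inv]
  have hdx : deriv (fun t => prol1 F (fun x _ => x * Real.log x - 2 * x)
      (fun x y => y * Real.log x) t y p) x = y * (-(x ^ 2)⁻¹) := by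
    rw [hev.deriv_eq]
    exact (((hasDerivAt_inv hxne).const_mul y).add_const p).deriv
  have hdy : deriv (fun t => prol1 F (fun x _ => x * Real.log x - 2 * x)
      (fun x y => y * Real.log x) x t p) y = 1 / x := by
    have : (fun t => prol1 F (fun x _ => x * Real.log x - 2 * x)
        (fun x y => y * Real.log x) x t p) = fun t => t / x + p :=
      funext fun t => prol1_eq b hxne t p
    rw [this]
    exact (((hasDerivAt_id y).div_const x).add_const p).deriv
  have hdp : deriv (fun t => prol1 F (fun x _ => x * Real.log x - 2 * x)
      (fun x y => y * Real.log x) x y t) p = 1 := by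
    have : (fun t => prol1 F (fun x _ => x * Real.log x - 2 * x)
        (fun x y => y * Real.log x) x y t) = fun t => y / x + t :=
      funext fun t => prol1_eq b hxne y t
    rw [this]
    exact ((hasDerivAt_id p).const_add (y / x)).deriv
  simp only [prol2, totalD, pdx3, pdy3, pdp3, hF] at hdx hdy hdp ⊢
  simp only [hdx, hdy, hdp, deriv_const', dA hxne, dB hxne, dC, dfx hxne, dfy hy, dfp,
    prol1_eq b hxne, deriv_const_add, deriv_add_const, deriv_div_const, deriv_id'']
  rw [show deriv (fun t => y / x + t) p = 1 from ((hasDerivAt_id p).const_add (y / x)).deriv,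
    show deriv (fun t : ℝ => t ^ 2 / y - t / x) p = 2 * p / y - 1 / x from by
      simpa only [deriv_add_const] using dfp b x y p]
  field_simp
  ring
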